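/- For all indices 1 ≤ i, j ≤ ℓ, the operators K_i and F_j on F satisfy the quantum group relation K_i ∘ F_j ∘ K_i^{−1} = q_i^{−a_{ij}}·F_j, as an identity of ℂ(s)-linear endomorphisms of F. -/

import Mathlib

open MvPolynomial Finset

set_option synthInstance.maxHeartbeats 1000000
set_option maxHeartbeats 1000000

noncomputable section

/-- The base field `ℂ(s)`. -/
abbrev K0 := RatFunc ℂ

/-- The variables. -/
abbrev Var (ℓ : ℕ) (m l : Fin ℓ → ℕ) := ((i : Fin ℓ) × Fin (m i)) ⊕ ((i : Fin ℓ) × Fin (l i))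

/-- The rational function field over `ℂ(s)` in the given variables. -/
abbrev FF (ℓ : ℕ) (m l : Fin ℓ → ℕ) := FractionRing (MvPolynomial (Var ℓ m l) K0)

variable (ℓ : ℕ) (m l : Fin ℓ → ℕ) (d : Fin ℓ → ℕ) (a : Fin ℓ → Fin ℓ → ℤ)

def cstHom : K0 →+* FF ℓ m l :=
  (algebraMap (MvPolynomial (Var ℓ m l) K0) (FF ℓ m l)).comp
    (C : K0 →+* MvPolynomial (Var ℓ m l) K0)

def cst (c : K0) : FF ℓ m l := cstHom ℓ m l c

/-- The variable `V_{i,k}`. -/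
def V (i : Fin ℓ) (k : Fin (m i)) : FF ℓ m l :=
  algebraMap (MvPolynomial (Var ℓ m l) K0) (FF ℓ m l) (X (Sum.inl ⟨i, k⟩))

/-- The variable `W_{i,t}`. -/
def W (i : Fin ℓ) (t : Fin (l i)) : FF ℓ m l :=
  algebraMap (MvPolynomial (Var ℓ m l) K0) (FF ℓ m l) (X (Sum.inr ⟨i, t⟩))

/-- `s ∈ ℂ(s)`. -/
def sElt : K0 := RatFunc.X

/-- `q = s²`. -/
def qElt : K0 := RatFunc.X ^ 2

/-- `q^e` for an integer exponent `e`. -/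
def qz (e : ℤ) : K0 := qElt ^ e

/-- `q_i^e = q^{d_i·e}`. -/
def qiz (i : Fin ℓ) (e : ℤ) : K0 := qElt ^ ((d i : ℤ) * e)

/-- `q_i − q_i⁻¹`. -/
def qdiff (i : Fin ℓ) : K0 := qiz ℓ d i 1 - qiz ℓ d i (-1)

/-- `c_i = s^{Σ_j d_j·m_j·a_{ji}}`. -/
def cElt (i : Fin ℓ) : K0 := sElt ^ (∑ j : Fin ℓ, (d j : ℤ) * (m j : ℤ) * a j i)

/-- The algebra automorphism of the polynomial ring rescaling the variable `w` by the
nonzero constant `c` and fixing all other variables. -/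
def scalePoly (c : K0) (hc : c ≠ 0) (w : Var ℓ m l) :
    MvPolynomial (Var ℓ m l) K0 ≃ₐ[K0] MvPolynomial (Var ℓ m l) K0 :=
  AlgEquiv.ofAlgHom
    (aeval (fun j => if j = w then MvPolynomial.C c * X j else X j))
    (aeval (fun j => if j = w then MvPolynomial.C c⁻¹ * X j else X j))
    (by
      apply MvPolynomial.algHom_ext; intro j
      by_cases h : j = w <;>
        simp [h, ← mul_assoc, ← C_mul, mul_inv_cancel₀ hc, inv_mul_cancel₀ hc])
    (by
      apply MvPolynomial.algHom_ext; intro j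
      by_cases h : j = w <;>
        simp [h, ← mul_assoc, ← C_mul, mul_inv_cancel₀ hc, inv_mul_cancel₀ hc])

/-- The induced automorphism of `F`. -/
def scaleField (c : K0) (hc : c ≠ 0) (w : Var ℓ m l) : FF ℓ m l ≃+* FF ℓ m l :=
  IsFractionRing.ringEquivOfRingEquiv (scalePoly ℓ m l c hc w).toRingEquiv

/-- `u_{i,k}` : the automorphism `V_{i,k} ↦ q^{d_i}·V_{i,k}`. -/
def uik (i : Fin ℓ) (k : Fin (m i)) : FF ℓ m l ≃+* FF ℓ m l :=
  scaleField ℓ m l (qElt ^ (d i)) (pow_ne_zero _ (pow_ne_zero _ RatFunc.X_ne_zero))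
    (Sum.inl ⟨i, k⟩)

/-- The field `ℂ(s)({W_{i,t}})` of rational functions in the `W`-variables only:
the coefficient field for the polynomials `R_i^{(±)}`. -/
abbrev WField := FractionRing (MvPolynomial ((i : Fin ℓ) × Fin (l i)) K0)

/-- `W_{i,t}` as an element of `ℂ(s)({W_{i,t}})`. -/
def Wsmall (i : Fin ℓ) (t : Fin (l i)) : WField ℓ l :=
  algebraMap (MvPolynomial ((i : Fin ℓ) × Fin (l i)) K0) (WField ℓ l) (X ⟨i, t⟩)

/-- The natural embedding `ℂ(s)({W_{i,t}}) ↪ F`. -/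
def wEmb : WField ℓ l →+* FF ℓ m l :=
  IsFractionRing.lift (g :=
    ((algebraMap (MvPolynomial (Var ℓ m l) K0) (FF ℓ m l)).comp
      (rename (Sum.inr : ((i : Fin ℓ) × Fin (l i)) → Var ℓ m l)).toRingHom))
    ((IsFractionRing.injective (MvPolynomial (Var ℓ m l) K0) (FF ℓ m l)).comp
      (rename_injective _ Sum.inr_injective))

/-- Evaluation of a polynomial with coefficients in `ℂ(s)({W_{i,t}})` at a point of `F`. -/
def Rval (P : Polynomial (WField ℓ l)) (x : FF ℓ m l) : FF ℓ m l :=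
  Polynomial.eval₂ (wEmb ℓ m l) x P

/-- The element `K_i = c_i·Π_t W_{i,t}^{−1}·Π_{j,p} V_{j,p}^{a_{ji}}` of `F`. -/
def Kelt (i : Fin ℓ) : FF ℓ m l :=
  cst ℓ m l (cElt ℓ m d a i) * (∏ t : Fin (l i), (W ℓ m l i t)⁻¹) *
    ∏ j : Fin ℓ, ∏ p : Fin (m j), (V ℓ m l j p) ^ (a j i)

/-- Multiplication by `K_i`. -/
def Kop (i : Fin ℓ) : FF ℓ m l → FF ℓ m l := fun f => Kelt ℓ m l d a i * f

/-- Multiplication by `K_i⁻¹`. -/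
def Kinv (i : Fin ℓ) : FF ℓ m l → FF ℓ m l := fun f => (Kelt ℓ m l d a i)⁻¹ * f

/-- The operator `F_i`. -/
def Fop (Rm : (i : Fin ℓ) → Polynomial (WField ℓ l)) (i : Fin ℓ) :
    FF ℓ m l → FF ℓ m l := fun f =>
  cst ℓ m l (-(qiz ℓ d i (-(2 * (m i : ℤ))) / qdiff ℓ d i)) * (∏ p : Fin (m i), V ℓ m l i p) *
    (∏ j ∈ univ.filter (fun j => j < i), ∏ p : Fin (m j), (V ℓ m l j p) ^ (a j i)) *
    ∑ k : Fin (m i),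
      ((V ℓ m l i k) ^ (-2 : ℤ)
          * Rval ℓ m l (Rm i) (cst ℓ m l (qiz ℓ d i 2) * (V ℓ m l i k) ^ 2) *
        (∏ j ∈ univ.filter (fun j => j < i), ∏ r ∈ range (-(a j i)).toNat, ∏ p : Fin (m j),
          (cst ℓ m l (qiz ℓ d i 2) * (V ℓ m l i k) ^ 2
            - cst ℓ m l (qz ((d j : ℤ) * (a j i + 2 * ((r : ℤ) + 1)))) * (V ℓ m l j p) ^ 2)) /
        (∏ p ∈ univ.erase k, ((V ℓ m l i k) ^ 2 - (V ℓ m l i p) ^ 2))) *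
      (uik ℓ m l d i k) f

/-! ### Auxiliary lemmas -/

lemma qElt_ne : qElt ≠ 0 := pow_ne_zero _ RatFunc.X_ne_zero

lemma V_ne (i : Fin ℓ) (k : Fin (m i)) : V ℓ m l i k ≠ 0 :=
  (map_ne_zero_iff _
    (IsFractionRing.injective (MvPolynomial (Var ℓ m l) K0) (FF ℓ m l))).mpr (X_ne_zero _)

lemma W_ne (i : Fin ℓ) (t : Fin (l i)) : W ℓ m l i t ≠ 0 :=
  (map_ne_zero_iff _
    (IsFractionRing.injective (MvPolynomial (Var ℓ m l) K0) (FF ℓ m l))).mpr (X_ne_zero _)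

lemma cst_ne {x : K0} (hx : x ≠ 0) : cst ℓ m l x ≠ 0 :=
  (map_ne_zero_iff _ (cstHom ℓ m l).injective).mpr hx

lemma Kelt_ne (i : Fin ℓ) : Kelt ℓ m l d a i ≠ 0 := by
  refine mul_ne_zero (mul_ne_zero (cst_ne ℓ m l ?_) ?_) ?_
  · exact zpow_ne_zero _ RatFunc.X_ne_zero
  · exact Finset.prod_ne_zero_iff.mpr fun t _ => inv_ne_zero (W_ne ℓ m l i t)
  · exact Finset.prod_ne_zero_iff.mpr fun j' _ =>
      Finset.prod_ne_zero_iff.mpr fun p _ => zpow_ne_zero _ (V_ne ℓ m l j' p)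

lemma scaleField_algebraMap (c : K0) (hc : c ≠ 0) (w : Var ℓ m l)
    (p : MvPolynomial (Var ℓ m l) K0) :
    scaleField ℓ m l c hc w (algebraMap (MvPolynomial (Var ℓ m l) K0) (FF ℓ m l) p)
      = algebraMap (MvPolynomial (Var ℓ m l) K0) (FF ℓ m l) (scalePoly ℓ m l c hc w p) :=
  by
  unfold scaleField IsFractionRing.ringEquivOfRingEquiv
  exact IsLocalization.ringEquivOfRingEquiv_eq _ p

lemma scaleField_X (c : K0) (hc : c ≠ 0) (w v : Var ℓ m l) :
    scaleField ℓ m l c hc w (algebraMap (MvPolynomial (Var ℓ m l) K0) (FF ℓ m l) (X v))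
      = (if v = w then cst ℓ m l c else 1) *
        algebraMap (MvPolynomial (Var ℓ m l) K0) (FF ℓ m l) (X v) := by
  rw [scaleField_algebraMap]
  simp only [scalePoly, AlgEquiv.ofAlgHom_apply, aeval_X]
  by_cases h : v = w
  · simp [h, cst, cstHom, map_mul]
  · simp [h]

lemma uik_V (j : Fin ℓ) (k : Fin (m j)) (x : (j' : Fin ℓ) × Fin (m j')) :
    uik ℓ m l d j k (V ℓ m l x.1 x.2)
      = (if x = ⟨j, k⟩ then cst ℓ m l (qElt ^ (d j)) else 1) * V ℓ m l x.1 x.2 := by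
  rw [uik, V, scaleField_X]
  congr 1
  simp [Sum.inl.injEq]

lemma uik_W (j : Fin ℓ) (k : Fin (m j)) (i : Fin ℓ) (t : Fin (l i)) :
    uik ℓ m l d j k (W ℓ m l i t) = W ℓ m l i t := by
  rw [uik, W, scaleField_X]
  simp

lemma uik_cst (j : Fin ℓ) (k : Fin (m j)) (x : K0) :
    uik ℓ m l d j k (cst ℓ m l x) = cst ℓ m l x := by
  rw [cst, cstHom, RingHom.comp_apply, uik, scaleField_algebraMap]
  congr 1
  simp [scalePoly]

lemma uik_prodV (i j : Fin ℓ) (k : Fin (m j)) :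
    uik ℓ m l d j k (∏ j' : Fin ℓ, ∏ p : Fin (m j'), (V ℓ m l j' p) ^ (a j' i))
      = cst ℓ m l (qz ((d j : ℤ) * a j i)) *
          ∏ j' : Fin ℓ, ∏ p : Fin (m j'), (V ℓ m l j' p) ^ (a j' i) := by
  rw [Finset.prod_sigma' (univ : Finset (Fin ℓ)) (fun _ => univ)
    (fun j' p => (V ℓ m l j' p) ^ (a j' i)), map_prod]
  have key : ∀ x : (j' : Fin ℓ) × Fin (m j'),
      uik ℓ m l d j k ((V ℓ m l x.1 x.2) ^ (a x.1 i))
        = (if x = ⟨j, k⟩ then cst ℓ m l (qz ((d j : ℤ) * a j i)) else 1) *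
            (V ℓ m l x.1 x.2) ^ (a x.1 i) := by
    intro x
    rw [map_zpow₀, uik_V, mul_zpow]
    by_cases h : x = (⟨j, k⟩ : (j' : Fin ℓ) × Fin (m j'))
    · subst h
      rw [if_pos rfl, if_pos rfl]
      congr 1
      rw [cst, ← map_zpow₀ (cstHom ℓ m l)]
      congr 1
      rw [qz, ← zpow_natCast qElt (d j), ← zpow_mul]
    · simp [h]
  rw [Finset.prod_congr rfl fun x _ => key x, Finset.prod_mul_distrib,
    Finset.prod_ite_eq' _ (⟨j, k⟩ : (j' : Fin ℓ) × Fin (m j'))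
      (fun _ => cst ℓ m l (qz ((d j : ℤ) * a j i)))]
  simp

lemma uik_Kelt (i j : Fin ℓ) (k : Fin (m j)) :
    uik ℓ m l d j k (Kelt ℓ m l d a i)
      = cst ℓ m l (qz ((d j : ℤ) * a j i)) * Kelt ℓ m l d a i := by
  rw [Kelt, map_mul, map_mul, uik_cst, map_prod, uik_prodV]
  have : ∀ t : Fin (l i), uik ℓ m l d j k ((W ℓ m l i t)⁻¹) = (W ℓ m l i t)⁻¹ := by
    intro t; rw [map_inv₀, uik_W]
  rw [Finset.prod_congr rfl fun t _ => this t]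
  ring

/-- `K_i ∘ F_j ∘ K_i⁻¹ = q_i^{−a_{ij}}·F_j`. -/
theorem qgroup_KFK
    (ℓ : ℕ) (hℓ : 1 ≤ ℓ)
    (a : Fin ℓ → Fin ℓ → ℤ) (ha : ∀ i, a i i = 2) (ha' : ∀ i j, i ≠ j → a i j ≤ 0)
    (d : Fin ℓ → ℕ) (hd : ∀ i, 0 < d i)
    (hsym : ∀ i j, (d i : ℤ) * a i j = (d j : ℤ) * a j i)
    (m : Fin ℓ → ℕ) (hm : ∀ i, 0 < m i)
    (l : Fin ℓ → ℕ) (hln : ∀ i, (l i : ℤ) = ∑ j, (m j : ℤ) * a j i)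
    (Rp Rm : (i : Fin ℓ) → Polynomial (WField ℓ l))
    (hR : ∀ i, Rp i * Rm i =
      ∏ t : Fin (l i), (Polynomial.X * Polynomial.C (Wsmall ℓ l i t)⁻¹
        - Polynomial.C (Wsmall ℓ l i t)))
    (i j : Fin ℓ) :
    Kop ℓ m l d a i ∘ Fop ℓ m l d a Rm j ∘ Kinv ℓ m l d a i
      = cst ℓ m l (qiz ℓ d i (-(a i j))) • Fop ℓ m l d a Rm j := by
  have hK : Kelt ℓ m l d a i ≠ 0 := Kelt_ne ℓ m l d a i
  have hC : cst ℓ m l (qz ((d i : ℤ) * a i j)) ≠ 0 :=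
    cst_ne ℓ m l (zpow_ne_zero _ (qElt_ne))
  have hcc : cst ℓ m l (qiz ℓ d i (-(a i j)))
      = (cst ℓ m l (qz ((d i : ℤ) * a i j)))⁻¹ := by
    rw [cst, cst, ← map_inv₀ (cstHom ℓ m l)]
    congr 1
    rw [qiz, qz, ← zpow_neg]
    congr 1
    ring
  have huK : ∀ k : Fin (m j), uik ℓ m l d j k (Kelt ℓ m l d a i)
      = cst ℓ m l (qz ((d i : ℤ) * a i j)) * Kelt ℓ m l d a i := by
    intro k
    rw [uik_Kelt]
    congr 3
    rw [hsym]
  funext f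
  simp only [Function.comp_apply, Pi.smul_apply, smul_eq_mul, Kop, Kinv, Fop, hcc]
  simp_rw [map_mul, map_inv₀, huK, mul_inv,
    mul_left_comm _ ((cst ℓ m l (qz ((d i : ℤ) * a i j)))⁻¹ * (Kelt ℓ m l d a i)⁻¹)]
  rw [← Finset.mul_sum]
  field_simp
  ring_nf
  simp only [mul_comm (cst ℓ m l (qiz ℓ d j 2))]
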